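/- In the polynomial ring R = ℂ[c₁, c₂, c₂', c₃], the four polynomials d₁ = c₁, d₃ = c₁·c₂ − c₃, d₄ = c₂² + c₂'² + c₂·c₂' − c₁²·(c₂ + c₂'), and d₆ = c₂·c₂'·(c₂ + c₂' − c₁²) are algebraically independent over ℂ. -/

import Mathlib

open MvPolynomial

set_option maxRecDepth 8000
set_option maxHeartbeats 2000000

/-- `d₁ = c₁` in `ℂ[c₁, c₂, c₂', c₃]` (variables `X 0 = c₁`, `X 1 = c₂`, `X 2 = c₂'`,
`X 3 = c₃`). -/
noncomputable def d₁ : MvPolynomial (Fin 4) ℂ := X 0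

/-- `d₃ = c₁c₂ − c₃`. -/
noncomputable def d₃ : MvPolynomial (Fin 4) ℂ := X 0 * X 1 - X 3

/-- `d₄ = c₂² + c₂'² + c₂c₂' − c₁²(c₂ + c₂')`. -/
noncomputable def d₄ : MvPolynomial (Fin 4) ℂ :=
  X 1 ^ 2 + X 2 ^ 2 + X 1 * X 2 - X 0 ^ 2 * (X 1 + X 2)

/-- `d₆ = c₂c₂'(c₂ + c₂' − c₁²)`. -/
noncomputable def d₆ : MvPolynomial (Fin 4) ℂ :=
  X 1 * X 2 * (X 1 + X 2 - X 0 ^ 2)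

namespace Stmt7Aux

/-- The variable family `X 1, X 2, X 3` (avoiding `X 0`). -/
noncomputable def e : Fin 3 → MvPolynomial (Fin 4) ℂ := fun i => X (![1, 2, 3] i)

lemma e_injective : Function.Injective (![1, 2, 3] : Fin 3 → Fin 4) := by decide

/-- Key lemma: if `h`, viewed as a polynomial in `X 0` (via `finSuccEquiv`), has a nonzero
coefficient in positive degree, then the family `X 1, X 2, X 3, h` is algebraically
independent over `ℂ`. -/
lemma key (h : MvPolynomial (Fin 4) ℂ) (n : ℕ) (hn : n ≠ 0)
    (hc : ((finSuccEquiv ℂ 3) h).coeff n ≠ 0) :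
    AlgebraicIndependent ℂ (fun o : Option (Fin 3) => o.elim h e) := by
  have hbase : AlgebraicIndependent ℂ e :=
    (MvPolynomial.algebraicIndependent_X (Fin 4) ℂ).comp _ e_injective
  refine (hbase.option_iff_transcendental h).2 ?_
  set S := Algebra.adjoin ℂ (Set.range e) with hS
  -- every element of `S` becomes a constant polynomial under `finSuccEquiv`
  have const : ∀ b ∈ S, ∃ b', (finSuccEquiv ℂ 3) b = Polynomial.C b' := by
    intro b hb
    refine Algebra.adjoin_induction ?_ ?_ ?_ ?_ hb
    · rintro x ⟨i, rfl⟩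
      fin_cases i
      · refine ⟨X 0, ?_⟩
        show (finSuccEquiv ℂ 3) (X (Fin.succ 0)) = _
        rw [finSuccEquiv_X_succ]
      · refine ⟨X 1, ?_⟩
        show (finSuccEquiv ℂ 3) (X (Fin.succ 1)) = _
        rw [finSuccEquiv_X_succ]
      · refine ⟨X 2, ?_⟩
        show (finSuccEquiv ℂ 3) (X (Fin.succ 2)) = _
        rw [finSuccEquiv_X_succ]
    · intro r
      refine ⟨MvPolynomial.C r, ?_⟩
      have h0 := RingHom.congr_fun (finSuccEquiv_comp_C_eq_C (R := ℂ) 3) r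
      show (finSuccEquiv ℂ 3) (MvPolynomial.C r) = _
      rw [← h0]
      simp
    · rintro x y - - ⟨x', hx'⟩ ⟨y', hy'⟩
      exact ⟨x' + y', by simp [hx', hy']⟩
    · rintro x y - - ⟨x', hx'⟩ ⟨y', hy'⟩
      exact ⟨x' * y', by simp [hx', hy']⟩
  set T : MvPolynomial (Fin 4) ℂ →+* Polynomial (MvPolynomial (Fin 3) ℂ) :=
    (finSuccEquiv ℂ 3 : MvPolynomial (Fin 4) ℂ ≃ₐ[ℂ] _).toAlgHom.toRingHom with hT
  have hTapp : ∀ x, T x = (finSuccEquiv ℂ 3) x := fun _ => rfl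
  set ψ : S →+* MvPolynomial (Fin 3) ℂ :=
    (Polynomial.constantCoeff).comp (T.comp S.val.toRingHom) with hψdef
  have hTb : ∀ b : S, T (b : MvPolynomial (Fin 4) ℂ) = Polynomial.C (ψ b) := by
    intro b
    obtain ⟨b', hb'⟩ := const b b.2
    have hψb : ψ b = b' := by
      rw [hψdef]
      simp only [RingHom.comp_apply]
      change Polynomial.constantCoeff (T (b : MvPolynomial (Fin 4) ℂ)) = b'
      rw [hTapp, hb']
      simp
    rw [hψb, hTapp, hb']
  have hψinj : Function.Injective ψ := by
    intro a b hab
    have h1 : T (a : MvPolynomial (Fin 4) ℂ) = T (b : MvPolynomial (Fin 4) ℂ) := by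
      rw [hTb a, hTb b, hab]
    rw [hTapp, hTapp] at h1
    exact Subtype.ext ((finSuccEquiv ℂ 3).injective h1)
  rw [transcendental_iff]
  intro p hp
  have heval : T (Polynomial.aeval h p) = (p.map ψ).comp (T h) := by
    rw [Polynomial.aeval_def, Polynomial.hom_eval₂, Polynomial.comp, Polynomial.eval₂_map]
    congr 1
    exact RingHom.ext fun b => hTb b
  rw [hp, map_zero] at heval
  rcases (Polynomial.comp_eq_zero_iff).1 heval.symm with h0 | ⟨-, hC⟩
  · exact Polynomial.map_injective ψ hψinj (by simpa using h0)
  · exfalso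
    apply hc
    rw [← hTapp, hC, Polynomial.coeff_C, if_neg hn]

lemma hX1 : (X 1 : MvPolynomial (Fin 4) ℂ) = X (Fin.succ 0) := rfl
lemma hX2 : (X 2 : MvPolynomial (Fin 4) ℂ) = X (Fin.succ 1) := rfl

end Stmt7Aux

open Stmt7Aux in
/-- The polynomials `d₁, d₃, d₄, d₆` are algebraically independent over ℂ. -/
theorem stmt_7 :
    AlgebraicIndependent ℂ (![d₁, d₃, d₄, d₆] : Fin 4 → MvPolynomial (Fin 4) ℂ) := by
  -- First reduction: substitute `X 3 ↦ X 0 * X 1 - X 3` to turn `d₃` into `X 3`.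
  apply AlgebraicIndependent.of_comp ((aeval ![X 0, X 1, X 2, X 0 * X 1 - X 3] :
      MvPolynomial (Fin 4) ℂ →ₐ[ℂ] MvPolynomial (Fin 4) ℂ))
  -- `x` : elementary-symmetric-type family; `f` : the shapes of the `d`'s in terms of `x`.
  have hx : AlgebraicIndependent ℂ
      (![X 0, X 1 + X 2, X 1 * X 2, X 3] : Fin 4 → MvPolynomial (Fin 4) ℂ) := by
    apply AlgebraicIndependent.of_comp ((aeval ![X 1, X 0, X 2 - X 0, X 3] :
        MvPolynomial (Fin 4) ℂ →ₐ[ℂ] MvPolynomial (Fin 4) ℂ))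
    have hc1 : ((finSuccEquiv ℂ 3) ((X 0 * X 2 - X 0 ^ 2 : MvPolynomial (Fin 4) ℂ))).coeff 2
        ≠ 0 := by
      rw [map_sub, map_mul, map_pow, finSuccEquiv_X_zero, hX2, finSuccEquiv_X_succ]
      simp [Polynomial.coeff_X_pow]
    have hk := (key (X 0 * X 2 - X 0 ^ 2) 2 (by norm_num) hc1).comp
      (![some 0, some 1, none, some 2] : Fin 4 → Option (Fin 3)) (by decide)
    have heq : (⇑(aeval (![X 1, X 0, X 2 - X 0, X 3] : Fin 4 → MvPolynomial (Fin 4) ℂ)) ∘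
          (![X 0, X 1 + X 2, X 1 * X 2, X 3] : Fin 4 → MvPolynomial (Fin 4) ℂ)) =
        ((fun o : Option (Fin 3) => o.elim (X 0 * X 2 - X 0 ^ 2) e) ∘
          (![some 0, some 1, none, some 2] : Fin 4 → Option (Fin 3))) := by
      funext i
      fin_cases i <;> simp [e] <;> ring
    exact heq ▸ hk
  have hf : AlgebraicIndependent ℂ
      (![X 0, X 3, X 1 ^ 2 - X 2 - X 0 ^ 2 * X 1, X 2 * (X 1 - X 0 ^ 2)] :
        Fin 4 → MvPolynomial (Fin 4) ℂ) := by
    apply AlgebraicIndependent.of_comp ((aeval ![X 1, X 0, X 0 ^ 2 - X 1 ^ 2 * X 0 - X 2, X 3] :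
        MvPolynomial (Fin 4) ℂ →ₐ[ℂ] MvPolynomial (Fin 4) ℂ))
    have hc2 : ((finSuccEquiv ℂ 3)
        (((X 0 ^ 2 - X 1 ^ 2 * X 0 - X 2) * (X 0 - X 1 ^ 2) : MvPolynomial (Fin 4) ℂ))).coeff 3
        ≠ 0 := by
      rw [map_mul, map_sub, map_sub, map_pow, map_mul, map_pow, map_sub, map_pow,
        finSuccEquiv_X_zero, hX1, hX2, finSuccEquiv_X_succ, finSuccEquiv_X_succ]
      have hexp : ((Polynomial.X ^ 2 - Polynomial.C (X 0) ^ 2 * Polynomial.X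
            - Polynomial.C (X 1)) * (Polynomial.X - Polynomial.C (X 0) ^ 2)
            : Polynomial (MvPolynomial (Fin 3) ℂ)) =
          Polynomial.X ^ 3 - Polynomial.C (X 0 ^ 2) * Polynomial.X ^ 2
            - Polynomial.C (X 0 ^ 2) * Polynomial.X ^ 2
            + Polynomial.C (X 0 ^ 4 - X 1) * Polynomial.X
            + Polynomial.C (X 0 ^ 2 * X 1) := by
        simp only [map_sub, map_mul, map_pow]
        ring
      rw [hexp]
      simp only [Polynomial.coeff_add, Polynomial.coeff_sub, Polynomial.coeff_C_mul,
        Polynomial.coeff_X_pow, Polynomial.coeff_C, Polynomial.coeff_X]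
      norm_num
    have hk := (key ((X 0 ^ 2 - X 1 ^ 2 * X 0 - X 2) * (X 0 - X 1 ^ 2)) 3 (by norm_num) hc2).comp
      (![some 0, some 2, some 1, none] : Fin 4 → Option (Fin 3)) (by decide)
    have heq : (⇑(aeval (![X 1, X 0, X 0 ^ 2 - X 1 ^ 2 * X 0 - X 2, X 3] :
            Fin 4 → MvPolynomial (Fin 4) ℂ)) ∘
          (![X 0, X 3, X 1 ^ 2 - X 2 - X 0 ^ 2 * X 1, X 2 * (X 1 - X 0 ^ 2)] :
            Fin 4 → MvPolynomial (Fin 4) ℂ)) =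
        ((fun o : Option (Fin 3) =>
            o.elim ((X 0 ^ 2 - X 1 ^ 2 * X 0 - X 2) * (X 0 - X 1 ^ 2)) e) ∘
          (![some 0, some 2, some 1, none] : Fin 4 → Option (Fin 3))) := by
      funext i
      fin_cases i <;> simp [e] <;> ring
    exact heq ▸ hk
  have hfin := hx.aeval_of_algebraicIndependent hf
  have heq : (⇑(aeval (![X 0, X 1, X 2, X 0 * X 1 - X 3] : Fin 4 → MvPolynomial (Fin 4) ℂ)) ∘
        (![d₁, d₃, d₄, d₆] : Fin 4 → MvPolynomial (Fin 4) ℂ)) =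
      (fun i => aeval (![X 0, X 1 + X 2, X 1 * X 2, X 3] : Fin 4 → MvPolynomial (Fin 4) ℂ)
        ((![X 0, X 3, X 1 ^ 2 - X 2 - X 0 ^ 2 * X 1, X 2 * (X 1 - X 0 ^ 2)] :
          Fin 4 → MvPolynomial (Fin 4) ℂ) i)) := by
    funext i
    fin_cases i <;> simp [d₁, d₃, d₄, d₆] <;> ring
  exact heq ▸ hfin
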